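/- Let G be a connected multigraph and let (T,γ) be a rooted carving decomposition of G of width at most w and height at most h. Then G has a contractive rooted carving decomposition of width at most w and height at most w·h. -/

import Mathlib

/-- A multigraph: a map assigning to each edge an unordered pair of two
distinct vertices (loops forbidden, parallel edges allowed). -/
structure Multigraph (V E : Type) where
  ends : E → Sym2 V
  no_loops : ∀ e : E, ¬ (ends e).IsDiag

namespace Multigraph

variable {V E : Type}

/-- Two vertices are adjacent if some edge has them as its endpoints. -/
def Adj (G : Multigraph V E) (a b : V) : Prop :=
  a ≠ b ∧ ∃ e : E, a ∈ G.ends e ∧ b ∈ G.ends e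

/-- A multigraph is connected if every two vertices are joined by a finite
sequence of adjacencies. -/
def Connected (G : Multigraph V E) : Prop :=
  Nonempty V ∧ ∀ a b : V, Relation.ReflTransGen G.Adj a b

/-- The number of edges with one endpoint in `S` and the other outside `S`. -/
noncomputable def cutCount (G : Multigraph V E) (S : Set V) : ℕ :=
  Nat.card {e : E // (∃ a ∈ G.ends e, a ∈ S) ∧ (∃ a ∈ G.ends e, a ∉ S)}

/-- The degree of a vertex: the number of edge-endpoint incidences at `v`. -/
noncomputable def degree (G : Multigraph V E) (v : V) : ℕ :=
  Nat.card {e : E // v ∈ G.ends e}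

end Multigraph

/-- Rooted binary trees in which every internal node has exactly two children,
with leaves labeled by elements of `α`. -/
inductive BTree (α : Type) : Type
  | leaf (a : α) : BTree α
  | node (l r : BTree α) : BTree α

namespace BTree

variable {α : Type}

/-- The list of leaf labels of a binary tree. -/
def leaves : BTree α → List α
  | leaf a => [a]
  | node l r => l.leaves ++ r.leaves

/-- The set of leaf labels of a binary tree (for a node `u` of a carving
decomposition, this is `V[u]`). -/
def leafSet (T : BTree α) : Set α := {a | a ∈ T.leaves}

/-- The height of a binary tree: maximum number of edges on a root-to-leaf path. -/
def height : BTree α → ℕ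
  | leaf _ => 0
  | node l r => max l.height r.height + 1

/-- The list of all subtrees (i.e. nodes) of a binary tree. -/
def subtrees : BTree α → List (BTree α)
  | leaf a => [leaf a]
  | node l r => node l r :: (l.subtrees ++ r.subtrees)

end BTree

/-- A rooted carving decomposition of a multigraph `G` on vertex type `V`:
a rooted binary tree whose leaves are labeled bijectively with the vertices. -/
def IsCarvingDecomp {V E : Type} (_G : Multigraph V E) (T : BTree V) : Prop :=
  T.leaves.Nodup ∧ ∀ v : V, v ∈ T.leaves

/-- The carving decomposition `T` of `G` has width at most `w`:
for every node `u`, `|E(V[u], V∖V[u])| ≤ w`. -/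
def CarvWidthLE {V E : Type} (G : Multigraph V E) (T : BTree V) (w : ℕ) : Prop :=
  ∀ u ∈ T.subtrees, G.cutCount u.leafSet ≤ w

/-- A carving decomposition is contractive if for every internal node `u`
there is an edge with one endpoint in `V[u.l]` and the other in `V[u.r]`. -/
def Contractive {V E : Type} (G : Multigraph V E) (T : BTree V) : Prop :=
  ∀ l r : BTree V, BTree.node l r ∈ T.subtrees →
    ∃ e : E, (∃ a ∈ G.ends e, a ∈ l.leafSet) ∧ (∃ a ∈ G.ends e, a ∈ r.leafSet)


set_option linter.unusedSectionVars false
open Classical Finset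

namespace CW
variable {V E : Type} [Fintype V] [Fintype E] (G : Multigraph V E)

def cross (S : Set V) (e : E) : Prop :=
  (∃ a ∈ G.ends e, a ∈ S) ∧ (∃ a ∈ G.ends e, a ∉ S)

noncomputable def ecut (S : Set V) : Finset E := univ.filter (cross G S)

lemma cutCount_eq (S : Set V) : G.cutCount S = (ecut G S).card := by
  classical
  rw [Multigraph.cutCount, Nat.card_eq_fintype_card, Fintype.card_subtype]
  unfold ecut cross
  convert rfl

lemma exists_ends (e : E) : ∃ a b : V, a ≠ b ∧ G.ends e = s(a, b) := by
  obtain ⟨⟨a, b⟩, h⟩ := Quot.exists_rep (G.ends e)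
  refine ⟨a, b, ?_, h.symm⟩
  intro hab
  exact G.no_loops e (by rw [← h, hab]; exact Sym2.mk_isDiag_iff.mpr rfl)

lemma cross_iff {a b : V} {e : E} (h : G.ends e = s(a, b)) (S : Set V) :
    cross G S e ↔ ((a ∈ S ∨ b ∈ S) ∧ (a ∉ S ∨ b ∉ S)) := by
  simp only [cross, h, Sym2.mem_iff]
  constructor
  · rintro ⟨⟨x, hx1, hx2⟩, ⟨y, hy1, hy2⟩⟩
    constructor
    · rcases hx1 with rfl | rfl <;> [left; right] <;> exact hx2
    · rcases hy1 with rfl | rfl <;> [left; right] <;> exact hy2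
  · rintro ⟨h1, h2⟩
    exact ⟨by rcases h1 with h | h; exacts [⟨a, Or.inl rfl, h⟩, ⟨b, Or.inr rfl, h⟩],
         by rcases h2 with h | h; exacts [⟨a, Or.inl rfl, h⟩, ⟨b, Or.inr rfl, h⟩]⟩

lemma cutCount_empty : G.cutCount (∅ : Set V) = 0 := by
  rw [cutCount_eq]
  simp [ecut, cross, Finset.filter_eq_empty_iff]

lemma cutCount_univ : G.cutCount (Set.univ : Set V) = 0 := by
  rw [cutCount_eq]
  simp [ecut, cross, Finset.filter_eq_empty_iff]

lemma cutCount_mono_of_imp {S T : Set V} (h : ∀ e, cross G S e → cross G T e) :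
    G.cutCount S ≤ G.cutCount T := by
  rw [cutCount_eq, cutCount_eq]
  exact card_le_card (by intro e he; simp only [ecut, mem_filter] at *; exact ⟨he.1, h e he.2⟩)

def NoEdge (A B : Set V) : Prop :=
  ∀ e (a b : V), a ∈ G.ends e → b ∈ G.ends e → a ∈ A → b ∈ B → False

lemma NoEdge.symm {A B : Set V} (h : NoEdge G A B) : NoEdge G B A :=
  fun e a b ha hb h1 h2 => h e b a hb ha h2 h1

/-- The exchange identity for cuts. -/
lemma cut_exchange (A1 A2 B : Set V) (d12 : Disjoint A1 A2) (d1B : Disjoint A1 B)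
    (d2B : Disjoint A2 B) (hne : NoEdge G A1 A2) :
    G.cutCount (B ∪ A1) + G.cutCount (B ∪ A2) = G.cutCount B + G.cutCount (B ∪ A1 ∪ A2) := by
  classical
  simp only [cutCount_eq, ecut, card_filter]
  rw [← Finset.sum_add_distrib, ← Finset.sum_add_distrib]
  apply Finset.sum_congr rfl
  intro e _
  obtain ⟨a, b, hab, h⟩ := exists_ends G e
  have hne1 : ¬(a ∈ A1 ∧ b ∈ A2) := fun ⟨h1, h2⟩ => hne e a b (by rw [h]; simp) (by rw [h]; simp) h1 h2
  have hne2 : ¬(a ∈ A2 ∧ b ∈ A1) := fun ⟨h1, h2⟩ => hne e b a (by rw [h]; simp) (by rw [h]; simp) h2 h1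
  have da : ∀ x : V, ¬(x ∈ A1 ∧ x ∈ A2) := fun x ⟨h1, h2⟩ => d12.ne_of_mem h1 h2 rfl
  have db : ∀ x : V, ¬(x ∈ A1 ∧ x ∈ B) := fun x ⟨h1, h2⟩ => d1B.ne_of_mem h1 h2 rfl
  have dc : ∀ x : V, ¬(x ∈ A2 ∧ x ∈ B) := fun x ⟨h1, h2⟩ => d2B.ne_of_mem h1 h2 rfl
  simp only [cross_iff G h, Set.mem_union]
  have ha1 := da a; have ha2 := db a; have ha3 := dc a
  have hb1 := da b; have hb2 := db b; have hb3 := dc b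
  by_cases a ∈ A1 <;> by_cases a ∈ A2 <;> by_cases a ∈ B <;>
    by_cases b ∈ A1 <;> by_cases b ∈ A2 <;> by_cases b ∈ B <;> simp_all

lemma cut_add_of_noEdge (A1 A2 : Set V) (d12 : Disjoint A1 A2) (hne : NoEdge G A1 A2) :
    G.cutCount (A1 ∪ A2) = G.cutCount A1 + G.cutCount A2 := by
  have := cut_exchange G A1 A2 ∅ d12 (fun _ _ a => a) (fun _ _ a => a) hne
  simp only [Set.empty_union, cutCount_empty, zero_add] at this
  omega

end CW


namespace CW
variable {V E : Type} [Fintype V] [Fintype E] (G : Multigraph V E)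

def AdjOn (S : Set V) (a b : V) : Prop :=
  a ∈ S ∧ b ∈ S ∧ a ≠ b ∧ ∃ e : E, a ∈ G.ends e ∧ b ∈ G.ends e

lemma adjOn_symm (S : Set V) : Symmetric (AdjOn G S) := by
  rintro a b ⟨h1, h2, h3, e, h4, h5⟩; exact ⟨h2, h1, h3.symm, e, h5, h4⟩

def ConnOn (S : Set V) : Prop :=
  ∀ ⦃a⦄, a ∈ S → ∀ ⦃b⦄, b ∈ S → Relation.ReflTransGen (AdjOn G S) a b

lemma adjOn_mono {S T : Set V} (h : S ⊆ T) {a b : V} (hab : AdjOn G S a b) : AdjOn G T a b :=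
  ⟨h hab.1, h hab.2.1, hab.2.2⟩

lemma rtg_mono {S T : Set V} (h : S ⊆ T) {a b : V}
    (hab : Relation.ReflTransGen (AdjOn G S) a b) :
    Relation.ReflTransGen (AdjOn G T) a b :=
  Relation.ReflTransGen.mono (r := AdjOn G S) (p := AdjOn G T) (fun _ _ hxy => adjOn_mono G h hxy) a b hab

def ClosedIn (W S : Set V) : Prop :=
  ∀ e (a b : V), a ∈ G.ends e → b ∈ G.ends e → a ∈ S → a ∈ W → b ∈ W → b ∈ S

lemma ClosedIn.mono_left {W' W S : Set V} (h : W' ⊆ W) (hc : ClosedIn G W S) :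
    ClosedIn G W' S :=
  fun e a b ha hb haS haW hbW => hc e a b ha hb haS (h haW) (h hbW)

lemma ClosedIn.union {W A B : Set V} (hA : ClosedIn G W A) (hB : ClosedIn G W B) :
    ClosedIn G W (A ∪ B) := by
  rintro e a b ha hb (haS | haS) haW hbW
  · exact Or.inl (hA e a b ha hb haS haW hbW)
  · exact Or.inr (hB e a b ha hb haS haW hbW)

lemma rtg_closed {r : V → V → Prop} {R : Set V} {x y : V}
    (h : Relation.ReflTransGen r x y) (hx : x ∈ R) (hstep : ∀ z t, z ∈ R → r z t → t ∈ R) :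
    y ∈ R := by
  induction h with
  | refl => exact hx
  | tail _ hzt ih => exact hstep _ _ ih hzt

/-- Splitting a disconnected set into a (connected) component and the rest. -/
lemma component_split {A : Set V} (hA : ¬ ConnOn G A) :
    ∃ A1 A2 : Set V, A1 ∪ A2 = A ∧ Disjoint A1 A2 ∧ A1.Nonempty ∧ A2.Nonempty ∧
      ConnOn G A1 ∧ NoEdge G A1 A2 := by
  simp only [ConnOn] at hA
  push_neg at hA
  obtain ⟨a0, ha0, b0, hb0, hnr⟩ := hA
  refine ⟨{x | x ∈ A ∧ Relation.ReflTransGen (AdjOn G A) a0 x}, A \ {x | x ∈ A ∧ Relation.ReflTransGen (AdjOn G A) a0 x}, ?_, ?_, ⟨a0, ha0, .refl⟩, ⟨b0, hb0, fun h => hnr h.2⟩, ?_, ?_⟩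
  · rw [Set.union_diff_cancel']; · rfl
    · exact fun x hx => hx.1
  · exact Set.disjoint_sdiff_right
  · -- ConnOn of the component
    intro x hx y hy
    have key : ∀ z : V, Relation.ReflTransGen (AdjOn G A) a0 z →
        Relation.ReflTransGen (AdjOn G {x | x ∈ A ∧ Relation.ReflTransGen (AdjOn G A) a0 x}) a0 z := by
      intro z hz
      induction hz with
      | refl => exact .refl
      | @tail b c hab hbc ih =>
        exact ih.tail ⟨⟨hbc.1, hab⟩, ⟨hbc.2.1, hab.tail hbc⟩, hbc.2.2⟩
    have hsym : Std.Symm (AdjOn G {x | x ∈ A ∧ Relation.ReflTransGen (AdjOn G A) a0 x}) :=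
      ⟨fun _ _ h => adjOn_symm G {x | x ∈ A ∧ Relation.ReflTransGen (AdjOn G A) a0 x} h⟩
    exact (Std.Symm.symm _ _ (key x hx.2)).trans (key y hy.2)
  · rintro e a b ha hb ⟨haA, har⟩ hbA
    exact hbA.2 ⟨hbA.1, har.tail ⟨haA, hbA.1, fun hh => hbA.2 (hh ▸ ⟨haA, har⟩), e, ha, hb⟩⟩

/-- Absorption: if `A ⊆ S` is connected and every edge leaving `S` starts in `A`,
then `S` is connected (within ambient connected `X`). -/
lemma connOn_absorb {X S A : Set V} (hXconn : ConnOn G X) (hSX : S ⊆ X) (hAS : A ⊆ S)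
    (hAconn : ConnOn G A) (hAne : A.Nonempty)
    (hnbr : ∀ e (a b : V), a ∈ G.ends e → b ∈ G.ends e → a ∈ S → a ∉ A → b ∈ X → b ∈ S) :
    ConnOn G S := by
  have main : ∀ x ∈ S, ∃ a ∈ A, Relation.ReflTransGen (AdjOn G S) x a := by
    intro x hx
    by_contra hcon
    push_neg at hcon
    set R : Set V := {z | z ∈ S ∧ Relation.ReflTransGen (AdjOn G S) x z} with hR
    have hRA : ∀ z ∈ R, z ∉ A := fun z hz hzA => hcon z hzA hz.2
    obtain ⟨a, haA⟩ := hAne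
    have : a ∈ R := by
      refine rtg_closed (hXconn (hSX hx) (hSX (hAS haA))) ⟨hx, .refl⟩ ?_
      rintro z t hz ⟨hzX, htX, hne, e, he1, he2⟩
      have htS : t ∈ S := hnbr e z t he1 he2 hz.1 (hRA z hz) htX
      exact ⟨htS, hz.2.tail ⟨hz.1, htS, hne, e, he1, he2⟩⟩
    exact hRA a this haA
  intro x hx y hy
  obtain ⟨a1, ha1, hxa1⟩ := main x hx
  obtain ⟨a2, ha2, hya2⟩ := main y hy
  have h12 : Relation.ReflTransGen (AdjOn G S) a1 a2 :=
    rtg_mono G hAS (hAconn ha1 ha2)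
  exact (hxa1.trans h12).trans (by haveI : Std.Symm (AdjOn G S) := ⟨fun _ _ h => adjOn_symm G S h⟩; exact Std.Symm.symm _ _ hya2)

/-- A connected set split into two nonempty parts has a crossing edge. -/
lemma exists_cross_edge {X A B : Set V} (hpart : A ∪ B = X) (hdisj : Disjoint A B)
    (hconn : ConnOn G X) (hAne : A.Nonempty) (hBne : B.Nonempty) :
    ∃ e : E, (∃ x ∈ G.ends e, x ∈ A) ∧ (∃ x ∈ G.ends e, x ∈ B) := by
  obtain ⟨a, ha⟩ := hAne
  obtain ⟨b, hb⟩ := hBne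
  have key : ∀ a : V, Relation.ReflTransGen (AdjOn G X) a b → a ∈ A →
      ∃ e : E, (∃ x ∈ G.ends e, x ∈ A) ∧ (∃ x ∈ G.ends e, x ∈ B) := by
    intro a hrtg
    induction hrtg using Relation.ReflTransGen.head_induction_on with
    | refl => exact fun ha' => absurd rfl (hdisj.ne_of_mem ha' hb)
    | @head c d hcd hdb ih =>
      intro hc
      by_cases hdA : d ∈ A
      · exact ih hdA
      · have hdB : d ∈ B := by
          have hdu : d ∈ A ∪ B := by rw [hpart]; exact hcd.2.1
          exact hdu.resolve_left hdA
        obtain ⟨_, _, _, e, he1, he2⟩ := hcd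
        exact ⟨e, ⟨c, he1, hc⟩, ⟨d, he2, hdB⟩⟩
  exact key a (hconn (hpart ▸ Or.inl ha) (hpart ▸ Or.inr hb)) ha

end CW


namespace CW
variable {V E : Type} [Fintype V] [Fintype E] (G : Multigraph V E)

lemma closedIn_of_noEdge {W B B1 B2 : Set V} (hB : ClosedIn G W B) (hu : B1 ∪ B2 = B)
    (hne : NoEdge G B1 B2) : ClosedIn G W B1 := by
  intro e a b ha hb haB haW hbW
  have hbB : b ∈ B := hB e a b ha hb (hu ▸ Or.inl haB) haW hbW
  rcases (hu ▸ hbB : b ∈ B1 ∪ B2) with h | h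
  · exact h
  · exact absurd (hne e a b ha hb haB h) not_false

lemma split_P2 (w : ℕ) (X : Set V) (hXconn : ConnOn G X) (hXcut : G.cutCount X ≤ w)
    (Vl Vr : Set V) :
    ∀ n (B A : Set V), B.ncard ≤ n → A ∪ B = X → Disjoint A B → A.Nonempty → B.Nonempty →
    ClosedIn G Vl A → ClosedIn G Vr A → ClosedIn G Vl B → ClosedIn G Vr B →
    G.cutCount A ≤ w → G.cutCount B ≤ w → ConnOn G A →
    ∃ A' B' : Set V, A' ∪ B' = X ∧ Disjoint A' B' ∧ A'.Nonempty ∧ B'.Nonempty ∧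
      ConnOn G A' ∧ ConnOn G B' ∧ ClosedIn G Vl A' ∧ ClosedIn G Vr A' ∧ ClosedIn G Vl B' ∧
      ClosedIn G Vr B' ∧ G.cutCount A' ≤ w ∧ G.cutCount B' ≤ w := by
  intro n
  induction n with
  | zero =>
    intro B A hn _ _ _ hBne _ _ _ _ _ _ _
    have : B.ncard ≠ 0 := by
      rw [← Nat.pos_iff_ne_zero]
      exact (Set.ncard_pos B.toFinite).mpr hBne
    omega
  | succ n ih =>
    intro B A hn hu hd hAne hBne hclA hcrA hclB hcrB hcutA hcutB hconnA
    by_cases hconnB : ConnOn G B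
    · exact ⟨A, B, hu, hd, hAne, hBne, hconnA, hconnB, hclA, hcrA, hclB, hcrB, hcutA, hcutB⟩
    obtain ⟨B1, B2, hBu, hB12, hB1ne, hB2ne, hB1conn, hB1B2⟩ := component_split G hconnB
    have hB2B1 : NoEdge G B2 B1 := NoEdge.symm G hB1B2
    have hB1B : B1 ⊆ B := hBu ▸ Set.subset_union_left
    have hB2B : B2 ⊆ B := hBu ▸ Set.subset_union_right
    have hdAB1 : Disjoint A B1 := hd.mono_right hB1B
    have hdAB2 : Disjoint A B2 := hd.mono_right hB2B
    -- exchange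
    have hX' : A ∪ B1 ∪ B2 = X := by rw [Set.union_assoc, hBu, hu]
    have hexch : G.cutCount (A ∪ B1) + G.cutCount (A ∪ B2) =
        G.cutCount A + G.cutCount X := by
      have := cut_exchange G B1 B2 A hB12 hdAB1.symm hdAB2.symm hB1B2
      rwa [hX'] at this
    have hadd : G.cutCount B = G.cutCount B1 + G.cutCount B2 := by
      rw [← hBu]; exact cut_add_of_noEdge G B1 B2 hB12 hB1B2
    -- closures of pieces
    have hclB1 : ClosedIn G Vl B1 := closedIn_of_noEdge G hclB hBu hB1B2
    have hcrB1 : ClosedIn G Vr B1 := closedIn_of_noEdge G hcrB hBu hB1B2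
    have hclB2 : ClosedIn G Vl B2 := closedIn_of_noEdge G hclB
      (by rw [Set.union_comm]; exact hBu) hB2B1
    have hcrB2 : ClosedIn G Vr B2 := closedIn_of_noEdge G hcrB
      (by rw [Set.union_comm]; exact hBu) hB2B1
    have hsubX : ∀ Y : Set V, Y ⊆ B → A ∪ Y ⊆ X := by
      intro Y hY x hx
      rcases hx with h | h
      · exact hu ▸ Or.inl h
      · exact hu ▸ Or.inr (hY h)
    -- connectivity of A ∪ B1
    have hconnAB1 : ConnOn G (A ∪ B1) := by
      refine connOn_absorb G hXconn (hsubX B1 hB1B) Set.subset_union_left hconnA hAne ?_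
      intro e a b ha hb haS haA hbX
      have haB1 : a ∈ B1 := haS.resolve_left haA
      rcases (hu ▸ hbX : b ∈ A ∪ B) with h | h
      · exact Or.inl h
      · rcases (hBu ▸ h : b ∈ B1 ∪ B2) with h2 | h2
        · exact Or.inr h2
        · exact absurd (hB1B2 e a b ha hb haB1 h2) not_false
    have hconnAB2 : ConnOn G (A ∪ B2) := by
      refine connOn_absorb G hXconn (hsubX B2 hB2B) Set.subset_union_left hconnA hAne ?_
      intro e a b ha hb haS haA hbX
      have haB2 : a ∈ B2 := haS.resolve_left haA
      rcases (hu ▸ hbX : b ∈ A ∪ B) with h | h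
      · exact Or.inl h
      · rcases (hBu ▸ h : b ∈ B1 ∪ B2) with h2 | h2
        · exact absurd (hB2B1 e a b ha hb haB2 h2) not_false
        · exact Or.inr h2
    have hB2lt : B2.ncard ≤ n := by
      have : B2 ⊂ B := by
        constructor
        · exact hB2B
        · intro hBB2
          obtain ⟨x, hx⟩ := hB1ne
          exact absurd rfl (hB12.ne_of_mem hx (hBB2 (hB1B hx)))
      have := Set.ncard_lt_ncard this B.toFinite
      omega
    have hB1lt : B1.ncard ≤ n := by
      have : B1 ⊂ B := by
        constructor
        · exact hB1B
        · intro hBB1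
          obtain ⟨x, hx⟩ := hB2ne
          exact absurd rfl (hB12.ne_of_mem (hBB1 (hB2B hx)) hx)
      have := Set.ncard_lt_ncard this B.toFinite
      omega
    by_cases hc1 : G.cutCount (A ∪ B1) ≤ w
    · refine ih B2 (A ∪ B1) hB2lt (by rw [Set.union_assoc, hBu, hu]) ?_
        (hAne.mono Set.subset_union_left) hB2ne
        (hclA.union G hclB1) (hcrA.union G hcrB1) hclB2 hcrB2 hc1 (by omega) hconnAB1
      exact Set.disjoint_union_left.mpr ⟨hdAB2, hB12⟩
    · have hc2 : G.cutCount (A ∪ B2) ≤ w := by omega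
      refine ih B1 (A ∪ B2) hB1lt ?_ ?_ (hAne.mono Set.subset_union_left) hB1ne
        (hclA.union G hclB2) (hcrA.union G hcrB2) hclB1 hcrB1 hc2 (by omega) hconnAB2
      · rw [Set.union_comm B1 _] at hBu
        rw [Set.union_assoc, hBu, hu]
      · exact Set.disjoint_union_left.mpr ⟨hdAB1, hB12.symm⟩

lemma split_P1 (w : ℕ) (X : Set V) (hXconn : ConnOn G X) (hXcut : G.cutCount X ≤ w)
    (Vl Vr : Set V) :
    ∀ n (A B : Set V), A.ncard ≤ n → A ∪ B = X → Disjoint A B → A.Nonempty → B.Nonempty →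
    ClosedIn G Vl A → ClosedIn G Vr A → ClosedIn G Vl B → ClosedIn G Vr B →
    G.cutCount A ≤ w → G.cutCount B ≤ w →
    ∃ A' B' : Set V, A' ∪ B' = X ∧ Disjoint A' B' ∧ A'.Nonempty ∧ B'.Nonempty ∧
      ConnOn G A' ∧ ConnOn G B' ∧ ClosedIn G Vl A' ∧ ClosedIn G Vr A' ∧ ClosedIn G Vl B' ∧
      ClosedIn G Vr B' ∧ G.cutCount A' ≤ w ∧ G.cutCount B' ≤ w := by
  intro n
  induction n with
  | zero =>
    intro A B hn _ _ hAne _ _ _ _ _ _ _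
    have : A.ncard ≠ 0 := by
      rw [← Nat.pos_iff_ne_zero]
      exact (Set.ncard_pos A.toFinite).mpr hAne
    omega
  | succ n ih =>
    intro A B hn hu hd hAne hBne hclA hcrA hclB hcrB hcutA hcutB
    by_cases hconnA : ConnOn G A
    · exact split_P2 G w X hXconn hXcut Vl Vr B.ncard B A le_rfl hu hd hAne hBne
        hclA hcrA hclB hcrB hcutA hcutB hconnA
    obtain ⟨A1, A2, hAu, hA12, hA1ne, hA2ne, _, hA1A2⟩ := component_split G hconnA
    have hA2A1 : NoEdge G A2 A1 := NoEdge.symm G hA1A2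
    have hA1A : A1 ⊆ A := hAu ▸ Set.subset_union_left
    have hA2A : A2 ⊆ A := hAu ▸ Set.subset_union_right
    have hdA1B : Disjoint A1 B := hd.mono_left hA1A
    have hdA2B : Disjoint A2 B := hd.mono_left hA2A
    have hX' : B ∪ A1 ∪ A2 = X := by
      rw [Set.union_assoc, hAu, Set.union_comm, hu]
    have hexch : G.cutCount (B ∪ A1) + G.cutCount (B ∪ A2) =
        G.cutCount B + G.cutCount X := by
      have := cut_exchange G A1 A2 B hA12 hdA1B hdA2B hA1A2
      rwa [hX'] at this
    have hadd : G.cutCount A = G.cutCount A1 + G.cutCount A2 := by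
      rw [← hAu]; exact cut_add_of_noEdge G A1 A2 hA12 hA1A2
    have hclA1 : ClosedIn G Vl A1 := closedIn_of_noEdge G hclA hAu hA1A2
    have hcrA1 : ClosedIn G Vr A1 := closedIn_of_noEdge G hcrA hAu hA1A2
    have hclA2 : ClosedIn G Vl A2 := closedIn_of_noEdge G hclA
      (by rw [Set.union_comm]; exact hAu) hA2A1
    have hcrA2 : ClosedIn G Vr A2 := closedIn_of_noEdge G hcrA
      (by rw [Set.union_comm]; exact hAu) hA2A1
    have hA1lt : A1.ncard ≤ n := by
      have : A1 ⊂ A := ⟨hA1A, fun hAA1 => by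
        obtain ⟨x, hx⟩ := hA2ne
        exact absurd rfl (hA12.ne_of_mem (hAA1 (hA2A hx)) hx)⟩
      have := Set.ncard_lt_ncard this A.toFinite
      omega
    have hA2lt : A2.ncard ≤ n := by
      have : A2 ⊂ A := ⟨hA2A, fun hAA2 => by
        obtain ⟨x, hx⟩ := hA1ne
        exact absurd rfl (hA12.ne_of_mem hx (hAA2 (hA1A hx)))⟩
      have := Set.ncard_lt_ncard this A.toFinite
      omega
    by_cases hc2 : G.cutCount (B ∪ A2) ≤ w
    · refine ih A1 (B ∪ A2) hA1lt ?_ ?_ hA1ne (hBne.mono Set.subset_union_left)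
        hclA1 hcrA1 (hclB.union G hclA2) (hcrB.union G hcrA2) (by omega) hc2
      · rw [Set.union_comm A1 _, Set.union_assoc, Set.union_comm A2 A1, hAu,
          Set.union_comm, hu]
      · exact Set.disjoint_union_right.mpr ⟨hdA1B, hA12⟩
    · have hc1 : G.cutCount (B ∪ A1) ≤ w := by omega
      refine ih A2 (B ∪ A1) hA2lt ?_ ?_ hA2ne (hBne.mono Set.subset_union_left)
        hclA2 hcrA2 (hclB.union G hclA1) (hcrB.union G hcrA1) (by omega) hc1
      · rw [Set.union_comm A2 _, Set.union_assoc, hAu, Set.union_comm, hu]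
      · exact Set.disjoint_union_right.mpr ⟨hdA2B, hA12.symm⟩

/-- The main splitting lemma. -/
lemma split_main (w : ℕ) (Vl Vr : Set V) (hVlVr : Disjoint Vl Vr)
    (hVl : G.cutCount Vl ≤ w) (hVr : G.cutCount Vr ≤ w)
    (X : Set V) (hX : X ⊆ Vl ∪ Vr) (hXconn : ConnOn G X) (hclX : ClosedIn G Vl X)
    (hcrX : ClosedIn G Vr X) (hXcut : G.cutCount X ≤ w)
    (h1 : (X ∩ Vl).Nonempty) (h2 : (X ∩ Vr).Nonempty) :
    ∃ A B : Set V, A ∪ B = X ∧ Disjoint A B ∧ A.Nonempty ∧ B.Nonempty ∧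
      ConnOn G A ∧ ConnOn G B ∧ ClosedIn G Vl A ∧ ClosedIn G Vr A ∧ ClosedIn G Vl B ∧
      ClosedIn G Vr B ∧ G.cutCount A ≤ w ∧ G.cutCount B ≤ w := by
  have hu : (X ∩ Vl) ∪ (X ∩ Vr) = X := by
    rw [← Set.inter_union_distrib_left]
    exact Set.inter_eq_self_of_subset_left hX
  have hd : Disjoint (X ∩ Vl) (X ∩ Vr) :=
    (hVlVr.mono Set.inter_subset_right Set.inter_subset_right)
  have hcutl : G.cutCount (X ∩ Vl) ≤ w := by
    refine le_trans (cutCount_mono_of_imp G ?_) hVl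
    rintro e ⟨⟨x, hx1, hx2⟩, ⟨y, hy1, hy2⟩⟩
    refine ⟨⟨x, hx1, hx2.2⟩, ⟨y, hy1, ?_⟩⟩
    intro hyVl
    exact hy2 ⟨hclX e x y hx1 hy1 hx2.1 hx2.2 hyVl, hyVl⟩
  have hcutr : G.cutCount (X ∩ Vr) ≤ w := by
    refine le_trans (cutCount_mono_of_imp G ?_) hVr
    rintro e ⟨⟨x, hx1, hx2⟩, ⟨y, hy1, hy2⟩⟩
    refine ⟨⟨x, hx1, hx2.2⟩, ⟨y, hy1, ?_⟩⟩
    intro hyVr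
    exact hy2 ⟨hcrX e x y hx1 hy1 hx2.1 hx2.2 hyVr, hyVr⟩
  have hcll : ClosedIn G Vl (X ∩ Vl) := by
    intro e a b ha hb haS haW hbW
    exact ⟨hclX e a b ha hb haS.1 haW hbW, hbW⟩
  have hclr : ClosedIn G Vr (X ∩ Vr) := by
    intro e a b ha hb haS haW hbW
    exact ⟨hcrX e a b ha hb haS.1 haW hbW, hbW⟩
  have hvac1 : ClosedIn G Vr (X ∩ Vl) := by
    intro e a b ha hb haS haW _
    exact absurd rfl (hVlVr.ne_of_mem haS.2 haW)
  have hvac2 : ClosedIn G Vl (X ∩ Vr) := by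
    intro e a b ha hb haS haW _
    exact absurd rfl (hVlVr.ne_of_mem haW haS.2)
  exact split_P1 G w X hXconn hXcut Vl Vr (X ∩ Vl).ncard (X ∩ Vl) (X ∩ Vr) le_rfl
    hu hd h1 h2 hcll hvac1 hvac2 hclr hcutl hcutr

end CW


namespace CW
open Finset
variable {V E : Type} [Fintype V] [Fintype E] (G : Multigraph V E)

lemma leafSet_leaf (a : V) : (BTree.leaf a).leafSet = {a} := by
  ext x; simp [BTree.leafSet, BTree.leaves]

lemma leafSet_node (l r : BTree V) :
    (BTree.node l r).leafSet = l.leafSet ∪ r.leafSet := by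
  ext x; simp [BTree.leafSet, BTree.leaves]

lemma self_mem_subtrees (t : BTree V) : t ∈ t.subtrees := by
  cases t <;> simp [BTree.subtrees]

lemma mem_leafSet_of_mem_leaves {t : BTree V} {a : V} (h : a ∈ t.leaves) : a ∈ t.leafSet := h

noncomputable def minner (Vl Vr S : Set V) : Finset E :=
  univ.filter (fun e => (∀ a ∈ G.ends e, a ∈ S) ∧
    (∃ a ∈ G.ends e, a ∈ Vl) ∧ (∃ a ∈ G.ends e, a ∈ Vr))

/-- The main construction. -/
lemma outer (w : ℕ) (u : BTree V) :
    u.leaves.Nodup → (∀ s ∈ u.subtrees, G.cutCount s.leafSet ≤ w) →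
    ∀ S : Set V, S ⊆ u.leafSet → S.Nonempty → ConnOn G S → G.cutCount S ≤ w →
    ClosedIn G u.leafSet S →
    ∃ t : BTree V, t.leafSet = S ∧ t.leaves.Nodup ∧
      (∀ s ∈ t.subtrees, G.cutCount s.leafSet ≤ w) ∧
      (∀ l' r' : BTree V, BTree.node l' r' ∈ t.subtrees →
        ∃ e : E, (∃ a ∈ G.ends e, a ∈ l'.leafSet) ∧ (∃ a ∈ G.ends e, a ∈ r'.leafSet)) ∧
      t.height ≤ w * u.height := by
  induction u with
  | leaf v =>
    intro _ hwid S hsub hne _ hcut _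
    have hS : S = {v} := by
      rw [leafSet_leaf] at hsub
      exact Set.Nonempty.subset_singleton_iff hne |>.mp hsub ▸ rfl
    refine ⟨BTree.leaf v, by rw [leafSet_leaf, hS], by simp [BTree.leaves], ?_, ?_, ?_⟩
    · intro s hs
      simp only [BTree.subtrees, List.mem_singleton] at hs
      subst hs
      rw [leafSet_leaf, ← hS]
      exact hcut
    · intro l' r' h
      simp only [BTree.subtrees, List.mem_singleton] at h
      exact absurd h (by simp)
    · simp [BTree.height]
  | node l r ihl ihr =>
    intro hnodup hwid S hsub hne hconn hcut hclosed
    -- basic facts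
    have hnodup' : l.leaves.Nodup ∧ r.leaves.Nodup ∧ l.leaves.Disjoint r.leaves := by
      simp [BTree.leaves, List.nodup_append] at hnodup
      exact ⟨hnodup.1, hnodup.2.1, fun a ha hb => hnodup.2.2 a ha a hb rfl⟩
    have hVlVr : Disjoint l.leafSet r.leafSet := by
      rw [Set.disjoint_left]
      intro a ha ha'
      exact hnodup'.2.2 ha ha'
    have hmeml : ∀ s ∈ l.subtrees, s ∈ (BTree.node l r).subtrees := by
      intro s hs; simp [BTree.subtrees, List.mem_append]; tauto
    have hmemr : ∀ s ∈ r.subtrees, s ∈ (BTree.node l r).subtrees := by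
      intro s hs; simp [BTree.subtrees, List.mem_append]; tauto
    have hwl : ∀ s ∈ l.subtrees, G.cutCount s.leafSet ≤ w := fun s hs => hwid s (hmeml s hs)
    have hwr : ∀ s ∈ r.subtrees, G.cutCount s.leafSet ≤ w := fun s hs => hwid s (hmemr s hs)
    have hVl : G.cutCount l.leafSet ≤ w := hwl l (self_mem_subtrees l)
    have hVr : G.cutCount r.leafSet ≤ w := hwr r (self_mem_subtrees r)
    have hUnion : (BTree.node l r).leafSet = l.leafSet ∪ r.leafSet := leafSet_node l r
    -- the inner recursion
    have inner : ∀ n (S' : Set V), S'.ncard ≤ n → S' ⊆ l.leafSet ∪ r.leafSet → S'.Nonempty →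
        ConnOn G S' → G.cutCount S' ≤ w → ClosedIn G l.leafSet S' → ClosedIn G r.leafSet S' →
        ∃ t : BTree V, t.leafSet = S' ∧ t.leaves.Nodup ∧
          (∀ s ∈ t.subtrees, G.cutCount s.leafSet ≤ w) ∧
          (∀ l' r' : BTree V, BTree.node l' r' ∈ t.subtrees →
            ∃ e : E, (∃ a ∈ G.ends e, a ∈ l'.leafSet) ∧ (∃ a ∈ G.ends e, a ∈ r'.leafSet)) ∧
          t.height ≤ (minner G l.leafSet r.leafSet S').card + w * max l.height r.height := by
      intro n
      induction n with
      | zero =>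
        intro S' hn _ hne' _ _ _ _
        have : S'.ncard ≠ 0 := by
          rw [← Nat.pos_iff_ne_zero]
          exact (Set.ncard_pos S'.toFinite).mpr hne'
        omega
      | succ n ihn =>
        intro S' hn hsub' hne' hconn' hcut' hcl' hcr'
        by_cases hSl : S' ⊆ l.leafSet
        · obtain ⟨t, h1, h2, h3, h4, h5⟩ := ihl hnodup'.1 hwl S' hSl hne' hconn' hcut' hcl'
          refine ⟨t, h1, h2, h3, h4, le_trans h5 ?_⟩
          exact le_trans (Nat.mul_le_mul_left w (le_max_left _ _)) (Nat.le_add_left _ _)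
        by_cases hSr : S' ⊆ r.leafSet
        · obtain ⟨t, h1, h2, h3, h4, h5⟩ := ihr hnodup'.2.1 hwr S' hSr hne' hconn' hcut' hcr'
          refine ⟨t, h1, h2, h3, h4, le_trans h5 ?_⟩
          exact le_trans (Nat.mul_le_mul_left w (le_max_right _ _)) (Nat.le_add_left _ _)
        -- must split
        have h1 : (S' ∩ l.leafSet).Nonempty := by
          obtain ⟨x, hx, hx2⟩ := Set.not_subset.mp hSr
          rcases hsub' hx with h | h
          · exact ⟨x, hx, h⟩
          · exact absurd h hx2
        have h2 : (S' ∩ r.leafSet).Nonempty := by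
          obtain ⟨x, hx, hx2⟩ := Set.not_subset.mp hSl
          rcases hsub' hx with h | h
          · exact absurd h hx2
          · exact ⟨x, hx, h⟩
        obtain ⟨A, B, hABu, hABd, hAne, hBne, hAconn, hBconn, hclA, hcrA, hclB, hcrB,
          hAcut, hBcut⟩ := split_main G w l.leafSet r.leafSet hVlVr hVl hVr S' hsub'
            hconn' hcl' hcr' hcut' h1 h2
        have hAS : A ⊆ S' := hABu ▸ Set.subset_union_left
        have hBS : B ⊆ S' := hABu ▸ Set.subset_union_right
        have hAcard : A.ncard ≤ n := by
          have : A ⊂ S' := ⟨hAS, fun hSA => by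
            obtain ⟨x, hx⟩ := hBne
            exact absurd rfl (hABd.ne_of_mem (hSA (hBS hx)) hx)⟩
          have := Set.ncard_lt_ncard this S'.toFinite
          omega
        have hBcard : B.ncard ≤ n := by
          have : B ⊂ S' := ⟨hBS, fun hSB => by
            obtain ⟨x, hx⟩ := hAne
            exact absurd rfl (hABd.ne_of_mem hx (hSB (hAS hx)))⟩
          have := Set.ncard_lt_ncard this S'.toFinite
          omega
        obtain ⟨tA, hA1, hA2, hA3, hA4, hA5⟩ := ihn A hAcard (le_trans hAS hsub')
          hAne hAconn hAcut hclA hcrA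
        obtain ⟨tB, hB1, hB2, hB3, hB4, hB5⟩ := ihn B hBcard (le_trans hBS hsub')
          hBne hBconn hBcut hclB hcrB
        -- the crossing edge
        obtain ⟨estar, ⟨x, hx1, hx2⟩, ⟨y, hy1, hy2⟩⟩ :=
          exists_cross_edge G hABu hABd hconn' hAne hBne
        have hxy : x ≠ y := fun h => absurd rfl (hABd.ne_of_mem (h ▸ hx2) hy2)
        have hends : ∀ c ∈ G.ends estar, c = x ∨ c = y := by
          obtain ⟨a, b, hab, hEq⟩ := exists_ends G estar
          rw [hEq] at hx1 hy1 ⊢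
          intro c hc
          rw [Sym2.mem_iff] at hx1 hy1 hc
          rcases hx1 with rfl | rfl <;> rcases hy1 with rfl | rfl <;> tauto
        -- e* is in minner S' but not in minner A or minner B
        have hcrossLR : (x ∈ l.leafSet ∧ y ∈ r.leafSet) ∨ (x ∈ r.leafSet ∧ y ∈ l.leafSet) := by
          rcases hsub' (hAS hx2) with hxl | hxr
          · rcases hsub' (hBS hy2) with hyl | hyr
            · exact absurd (hclA estar x y hx1 hy1 hx2 hxl hyl)
                (fun h => absurd rfl (hABd.ne_of_mem h hy2))
            · exact Or.inl ⟨hxl, hyr⟩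
          · rcases hsub' (hBS hy2) with hyl | hyr
            · exact Or.inr ⟨hxr, hyl⟩
            · exact absurd (hcrA estar x y hx1 hy1 hx2 hxr hyr)
                (fun h => absurd rfl (hABd.ne_of_mem h hy2))
        have hestar_mem : estar ∈ minner G l.leafSet r.leafSet S' := by
          simp only [minner, mem_filter, mem_univ, true_and]
          refine ⟨?_, ?_, ?_⟩
          · intro c hc
            rcases hends c hc with rfl | rfl
            · exact hAS hx2
            · exact hBS hy2
          · rcases hcrossLR with ⟨h, _⟩ | ⟨_, h⟩
            exacts [⟨x, hx1, h⟩, ⟨y, hy1, h⟩]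
          · rcases hcrossLR with ⟨_, h⟩ | ⟨h, _⟩
            exacts [⟨y, hy1, h⟩, ⟨x, hx1, h⟩]
        have hsubM : ∀ (C : Set V), C ⊆ S' →
            minner G l.leafSet r.leafSet C ⊆ minner G l.leafSet r.leafSet S' := by
          intro C hC e he
          simp only [minner, mem_filter, mem_univ, true_and] at he ⊢
          exact ⟨fun a ha => hC (he.1 a ha), he.2⟩
        have hcardA : (minner G l.leafSet r.leafSet A).card <
            (minner G l.leafSet r.leafSet S').card := by
          apply card_lt_card
          refine ⟨hsubM A hAS, fun hback => ?_⟩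
          have := hback hestar_mem
          simp only [minner, mem_filter, mem_univ, true_and] at this
          exact absurd rfl (hABd.ne_of_mem (this.1 y hy1) hy2)
        have hcardB : (minner G l.leafSet r.leafSet B).card <
            (minner G l.leafSet r.leafSet S').card := by
          apply card_lt_card
          refine ⟨hsubM B hBS, fun hback => ?_⟩
          have := hback hestar_mem
          simp only [minner, mem_filter, mem_univ, true_and] at this
          exact absurd rfl (hABd.ne_of_mem hx2 (this.1 x hx1))
        refine ⟨BTree.node tA tB, ?_, ?_, ?_, ?_, ?_⟩
        · rw [leafSet_node, hA1, hB1, hABu]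
        · simp only [BTree.leaves, List.nodup_append]
          refine ⟨hA2, hB2, ?_⟩
          intro a ha _ ha' hab
          subst hab
          have h1 : a ∈ A := hA1 ▸ mem_leafSet_of_mem_leaves ha
          have h2 : a ∈ B := hB1 ▸ mem_leafSet_of_mem_leaves ha'
          exact absurd rfl (hABd.ne_of_mem h1 h2)
        · intro s hs
          simp only [BTree.subtrees, List.mem_cons, List.mem_append] at hs
          rcases hs with rfl | hs | hs
          · rw [leafSet_node, hA1, hB1, hABu]; exact hcut'
          · exact hA3 s hs
          · exact hB3 s hs
        · intro l' r' hmem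
          simp only [BTree.subtrees, List.mem_cons, List.mem_append] at hmem
          rcases hmem with heq | hs | hs
          · injection heq with e1 e2
            subst e1; subst e2
            exact ⟨estar, ⟨x, hx1, hA1 ▸ hx2⟩, ⟨y, hy1, hB1 ▸ hy2⟩⟩
          · exact hA4 l' r' hs
          · exact hB4 l' r' hs
        · simp only [BTree.height]
          have hhA : tA.height + 1 ≤ (minner G l.leafSet r.leafSet S').card +
              w * max l.height r.height := by omega
          have hhB : tB.height + 1 ≤ (minner G l.leafSet r.leafSet S').card +
              w * max l.height r.height := by omega
          omega
    -- conclude the node case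
    obtain ⟨t, h1, h2, h3, h4, h5⟩ := inner S.ncard S le_rfl (hUnion ▸ hsub) hne hconn hcut
      (ClosedIn.mono_left G (hUnion ▸ Set.subset_union_left) hclosed)
      (ClosedIn.mono_left G (hUnion ▸ Set.subset_union_right) hclosed)
    refine ⟨t, h1, h2, h3, h4, ?_⟩
    have hmle : (minner G l.leafSet r.leafSet S).card ≤ w := by
      refine le_trans (le_trans (card_le_card ?_) (le_of_eq (cutCount_eq G l.leafSet).symm)) hVl
      intro e he
      simp only [minner, mem_filter, mem_univ, true_and] at he
      obtain ⟨hall, ⟨a, ha1, ha2⟩, ⟨b, hb1, hb2⟩⟩ := he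
      simp only [ecut, mem_filter, mem_univ, true_and, cross]
      exact ⟨⟨a, ha1, ha2⟩, ⟨b, hb1, fun hb => absurd rfl (hVlVr.ne_of_mem hb hb2)⟩⟩
    calc t.height ≤ (minner G l.leafSet r.leafSet S).card + w * max l.height r.height := h5
      _ ≤ w + w * max l.height r.height := by omega
      _ = w * (max l.height r.height + 1) := by ring
      _ = w * (BTree.node l r).height := by simp [BTree.height]

end CW

/-- Let `G` be a connected multigraph and `(T,γ)` a rooted carving
decomposition of `G` of width at most `w` and height at most `h`. Then `G` has a
contractive rooted carving decomposition of width at most `w` and height at most `w·h`. -/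
theorem statement_1 {V E : Type} [Fintype V] [Fintype E]
    (G : Multigraph V E) (hG : G.Connected)
    (T : BTree V) (hT : IsCarvingDecomp G T)
    (w h : ℕ) (hw : CarvWidthLE G T w) (hh : T.height ≤ h) :
    ∃ T' : BTree V, IsCarvingDecomp G T' ∧ Contractive G T' ∧
      CarvWidthLE G T' w ∧ T'.height ≤ w * h := by
  classical
  obtain ⟨hnodup, hall⟩ := hT
  have huniv : (Set.univ : Set V) ⊆ T.leafSet := fun v _ => hall v
  have hconn : CW.ConnOn G Set.univ := by
    intro a _ b _
    refine Relation.ReflTransGen.mono (r := G.Adj) (p := CW.AdjOn G Set.univ) ?_ a b (hG.2 a b)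
    rintro x y ⟨hxy, e, h1, h2⟩
    exact ⟨trivial, trivial, hxy, e, h1, h2⟩
  have hne : (Set.univ : Set V).Nonempty := by
    obtain ⟨v⟩ := hG.1
    exact ⟨v, trivial⟩
  have hcut : G.cutCount Set.univ ≤ w := by
    rw [CW.cutCount_univ]
    exact Nat.zero_le w
  have hclosed : CW.ClosedIn G T.leafSet Set.univ := fun _ _ _ _ _ _ _ _ => trivial
  obtain ⟨t, h1, h2, h3, h4, h5⟩ :=
    CW.outer G w T hnodup hw Set.univ huniv hne hconn hcut hclosed
  refine ⟨t, ⟨h2, fun v => ?_⟩, h4, h3, ?_⟩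
  · have hv : v ∈ t.leafSet := by rw [h1]; trivial
    exact hv
  calc t.height ≤ w * T.height := h5
    _ ≤ w * h := Nat.mul_le_mul_left w hh
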